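/- Let n, N ≥ 1 and let α : Fin N → ℤⁿ be a family of weights which generates ℤⁿ as an additive group, and such that the zero vector of ℝⁿ lies in the intrinsic (relative) interior of the convex hull of {α₁, …, α_N} in ℝⁿ. Then the ideal of ℂ[X₁, …, X_N, Y₁, …, Y_N] generated by the n polynomials μ_j = Σ_{i=1}^{N} α_i(j)·X_i·Y_i, j = 1, …, n, is a prime ideal. -/

import Mathlib

open Finset in
lemma MomentAux.exists_pos_combo {E : Type*} [NormedAddCommGroup E] [NormedSpace ℝ E]
    {ι : Type*} [Fintype ι] [Nonempty ι] (f : ι → E)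
    (h : (0 : E) ∈ intrinsicInterior ℝ (convexHull ℝ (Set.range f))) :
    ∃ t : ι → ℝ, (∀ i, 0 < t i) ∧ ∑ i, t i • f i = 0 := by
  classical
  set s : Set E := convexHull ℝ (Set.range f) with hs
  have hcard : (0:ℝ) < (Fintype.card ι : ℝ) := by
    have := Fintype.card_pos (α := ι); exact_mod_cast this
  set p : E := (Fintype.card ι : ℝ)⁻¹ • ∑ i, f i with hp
  have hpmem : p ∈ s := by
    rw [hs, convexHull_range_eq_exists_affineCombination]
    refine ⟨Finset.univ, fun _ => (Fintype.card ι : ℝ)⁻¹, fun _ _ => by positivity, ?_, ?_⟩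
    · simp only [Finset.sum_const, Finset.card_univ, nsmul_eq_mul]
      field_simp
    · rw [Finset.affineCombination_eq_linear_combination]
      · rw [hp, Finset.smul_sum]
      · simp only [Finset.sum_const, Finset.card_univ, nsmul_eq_mul]
        field_simp
  have h0span : (0 : E) ∈ affineSpan ℝ s := subset_affineSpan ℝ s (intrinsicInterior_subset h)
  have hpspan : p ∈ affineSpan ℝ s := subset_affineSpan ℝ s hpmem
  obtain ⟨y, hy, hy0⟩ := mem_intrinsicInterior.mp h
  have hpathmem : ∀ δ : ℝ, δ • p ∈ affineSpan ℝ s := by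
    intro δ
    have := (affineSpan ℝ s).smul_vsub_vadd_mem δ hpspan h0span h0span
    simpa using this
  set path : ℝ → ↥(affineSpan ℝ s) := fun δ => ⟨δ • p, hpathmem δ⟩ with hpath
  have hcont : Continuous path := Continuous.subtype_mk (continuous_id.smul continuous_const) _
  have hpath0 : path 0 = y := by
    apply Subtype.ext
    simp [hpath, hy0]
  have hopen : IsOpen (path ⁻¹' interior (Subtype.val ⁻¹' s)) :=
    hcont.isOpen_preimage _ isOpen_interior
  have h0mem : (0:ℝ) ∈ path ⁻¹' interior (Subtype.val ⁻¹' s) := by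
    simp only [Set.mem_preimage, hpath0]; exact hy
  obtain ⟨ε, hε, hball⟩ := Metric.isOpen_iff.mp hopen 0 h0mem
  set δ : ℝ := -(ε/2) with hδdef
  have hδneg : δ < 0 := by rw [hδdef]; linarith
  have hδball : δ ∈ Metric.ball (0:ℝ) ε := by
    rw [Metric.mem_ball, Real.dist_eq, hδdef]
    rw [sub_zero, abs_neg, abs_of_pos (by linarith : (0:ℝ) < ε/2)]
    linarith
  have hδmem : δ • p ∈ s := by
    have h2 := hball hδball
    rw [Set.mem_preimage] at h2
    have h3 : path δ ∈ Subtype.val ⁻¹' s := interior_subset h2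
    exact h3
  rw [hs, convexHull_range_eq_exists_affineCombination] at hδmem
  obtain ⟨sf, wgt, hw0, hw1, hcomb⟩ := hδmem
  rw [Finset.affineCombination_eq_linear_combination _ _ _ hw1] at hcomb
  set w' : ι → ℝ := fun i => if i ∈ sf then wgt i else 0 with hw'
  have hw'sum : ∑ i, w' i • f i = δ • p := by
    rw [← hcomb]
    rw [← Finset.sum_subset (Finset.subset_univ sf)]
    · exact Finset.sum_congr rfl fun i hi => by simp [hw', if_pos hi]
    · intro i _ hi
      simp [hw', if_neg hi]
  refine ⟨fun i => w' i + (-δ)/(Fintype.card ι : ℝ), fun i => ?_, ?_⟩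
  · have h1 : 0 ≤ w' i := by
      rw [hw']; dsimp only
      split
      · exact hw0 _ ‹_›
      · exact le_rfl
    have h2 : 0 < (-δ)/(Fintype.card ι : ℝ) := by
      apply div_pos (by linarith) hcard
    linarith
  · simp only [add_smul, Finset.sum_add_distrib, hw'sum]
    have : ∑ i : ι, ((-δ)/(Fintype.card ι : ℝ)) • f i = (-δ) • p := by
      rw [← Finset.smul_sum, hp, smul_smul, div_eq_mul_inv]
    rw [this]
    simp

open MvPolynomial

namespace MomentAux

noncomputable section

/-- Kernel of the algebra map killing the variables in `S` is the ideal generated by them. -/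
lemma ker_aeval_ite {σ : Type*} (S : Set σ) [DecidablePred (· ∈ S)] :
    RingHom.ker (aeval (R := ℂ) (fun i : σ =>
        if i ∈ S then (0 : MvPolynomial σ ℂ) else X i)) =
      Ideal.span ((fun i => (X i : MvPolynomial σ ℂ)) '' S) := by
  set g : σ → MvPolynomial σ ℂ := fun i => if i ∈ S then (0 : MvPolynomial σ ℂ) else X i with hg
  apply le_antisymm
  · intro f hf
    rw [RingHom.mem_ker] at hf
    have key : ∀ p : MvPolynomial σ ℂ,
        p - aeval g p ∈ Ideal.span ((fun i => (X i : MvPolynomial σ ℂ)) '' S) := by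
      intro p
      induction p using MvPolynomial.induction_on with
      | C a => simp [aeval_C, algebraMap_eq]
      | add p q hp hq =>
        have : p + q - aeval g (p + q) = (p - aeval g p) + (q - aeval g q) := by
          rw [map_add]; ring
        rw [this]; exact Ideal.add_mem _ hp hq
      | mul_X p i hp =>
        rw [map_mul, aeval_X]
        by_cases hi : i ∈ S
        · rw [hg]; simp only [if_pos hi, mul_zero, sub_zero]
          exact Ideal.mul_mem_left _ p (Ideal.subset_span ⟨i, hi, rfl⟩)
        · rw [hg]; simp only [if_neg hi]
          have : p * X i - aeval g p * X i = (p - aeval g p) * X i := by ring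
          rw [this]
          exact Ideal.mul_mem_right _ _ hp
    have := key f
    rw [hf, sub_zero] at this
    exact this
  · rw [Ideal.span_le]
    rintro _ ⟨i, hi, rfl⟩
    rw [SetLike.mem_coe, RingHom.mem_ker, aeval_X, hg]
    simp [if_pos hi]

variable {N : ℕ}

/-- The linear form with coefficient vector `v`. -/
def lf : (Fin N → ℂ) →ₗ[ℂ] MvPolynomial (Fin N) ℂ where
  toFun := fun v => ∑ k, C (v k) * X k
  map_add' := by
    intro v w
    simp only [Pi.add_apply, C_add, add_mul, Finset.sum_add_distrib]
  map_smul' := by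
    intro c v
    simp only [Pi.smul_apply, smul_eq_mul, RingHom.id_apply, Finset.smul_sum, smul_eq_C_mul,
      map_mul, mul_assoc]


lemma lf_single (i : Fin N) : lf (Pi.single i (1:ℂ)) = X i := by
  rw [lf]
  simp only [LinearMap.coe_mk, AddHom.coe_mk]
  rw [Finset.sum_eq_single i]
  · simp
  · intro k _ hk
    rw [Pi.single_apply, if_neg hk]
    simp
  · simp

/-- Substitution along a linear map. -/
def subst (h : (Fin N → ℂ) →ₗ[ℂ] (Fin N → ℂ)) :
    MvPolynomial (Fin N) ℂ →ₐ[ℂ] MvPolynomial (Fin N) ℂ :=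
  aeval (fun i => lf (h (Pi.single i 1)))

lemma subst_lf (h : (Fin N → ℂ) →ₗ[ℂ] (Fin N → ℂ)) (c : Fin N → ℂ) :
    subst h (lf c) = lf (h c) := by
  have hc : c = ∑ k, c k • (Pi.single k (1:ℂ) : Fin N → ℂ) := by
    ext j
    rw [Finset.sum_apply]
    rw [Finset.sum_eq_single j] <;> simp +contextual [Pi.single_apply]
  calc subst h (lf c) = ∑ k, C (c k) * lf (h (Pi.single k 1)) := by
        rw [lf]
        simp only [LinearMap.coe_mk, AddHom.coe_mk, map_sum, map_mul, subst, aeval_X, aeval_C]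
        rfl
    _ = ∑ k, lf (c k • h (Pi.single k 1)) := by
        apply Finset.sum_congr rfl
        intro k _
        rw [map_smul, smul_eq_C_mul]
    _ = lf (h c) := by
        rw [← map_sum]
        congr 1
        have : h c = ∑ k, c k • h (Pi.single k 1) := by
          conv_lhs => rw [hc]
          rw [map_sum]
          exact Finset.sum_congr rfl fun k _ => map_smul h _ _
        rw [this]

lemma subst_X (h : (Fin N → ℂ) →ₗ[ℂ] (Fin N → ℂ)) (i : Fin N) :
    subst h (X i) = lf (h (Pi.single i 1)) := by
  rw [subst, aeval_X]

lemma subst_subst (h₁ h₂ : (Fin N → ℂ) →ₗ[ℂ] (Fin N → ℂ)) (p : MvPolynomial (Fin N) ℂ) :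
    subst h₁ (subst h₂ p) = subst (h₁ ∘ₗ h₂) p := by
  have : (subst h₁).comp (subst h₂) = subst (h₁ ∘ₗ h₂) := by
    apply algHom_ext
    intro i
    rw [AlgHom.comp_apply, subst_X, subst_lf, subst_X, LinearMap.comp_apply]
  exact congrArg (fun f => f p) (congrArg DFunLike.coe this)

/-- Substitution along a linear equivalence, as an algebra equivalence. -/
def substEquiv (g : (Fin N → ℂ) ≃ₗ[ℂ] (Fin N → ℂ)) :
    MvPolynomial (Fin N) ℂ ≃ₐ[ℂ] MvPolynomial (Fin N) ℂ :=
  AlgEquiv.ofAlgHom (subst g.toLinearMap) (subst g.symm.toLinearMap)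
    (by
      apply algHom_ext
      intro i
      rw [AlgHom.comp_apply, subst_X, subst_lf]
      simp [lf_single])
    (by
      apply algHom_ext
      intro i
      rw [AlgHom.comp_apply, subst_X, subst_lf]
      simp [lf_single])

lemma substEquiv_apply (g : (Fin N → ℂ) ≃ₗ[ℂ] (Fin N → ℂ)) (p) :
    substEquiv g p = subst g.toLinearMap p := rfl

lemma substEquiv_symm_apply (g : (Fin N → ℂ) ≃ₗ[ℂ] (Fin N → ℂ)) (p) :
    (substEquiv g).symm p = subst g.symm.toLinearMap p := rfl


/-- The ideal generated by linearly independent linear forms is prime. -/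
lemma span_lf_isPrime {n : ℕ} (r : Fin n → (Fin N → ℂ)) (hr : LinearIndependent ℂ r) :
    (Ideal.span (Set.range fun j => lf (r j))).IsPrime := by
  classical
  have hs : LinearIndepOn ℂ id (Set.range r) :=
    (linearIndepOn_id_range_iff hr.injective).mpr hr
  let b := Module.Basis.extend hs
  haveI : Fintype ↥(hs.extend (Set.subset_univ (Set.range r))) :=
    FiniteDimensional.fintypeBasisIndex b
  have hcardeq : Fintype.card ↥(hs.extend (Set.subset_univ (Set.range r))) = N := by
    have h1 := Module.finrank_eq_card_basis b
    rw [Module.finrank_pi, Fintype.card_fin] at h1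
    omega
  let q : ↥(hs.extend (Set.subset_univ (Set.range r))) ≃ Fin N :=
    Fintype.equivFinOfCardEq hcardeq
  set g : (Fin N → ℂ) ≃ₗ[ℂ] (Fin N → ℂ) :=
    b.repr ≪≫ₗ Finsupp.linearEquivFunOnFinite ℂ ℂ _ ≪≫ₗ LinearEquiv.funCongrLeft ℂ ℂ q.symm
    with hgdef
  set e : Fin n → ↥(hs.extend (Set.subset_univ (Set.range r))) :=
    fun j => ⟨r j, hs.subset_extend _ ⟨j, rfl⟩⟩ with he
  have hbe : ∀ j, b (e j) = r j := fun j => Module.Basis.extend_apply_self hs (e j)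
  have hg : ∀ j, g (r j) = Pi.single (q (e j)) 1 := by
    intro j
    have h1 : b.repr (r j) = Finsupp.single (e j) 1 := by rw [← hbe j]; exact b.repr_self (e j)
    rw [hgdef]
    simp only [LinearEquiv.trans_apply, h1]
    ext k
    simp only [LinearEquiv.funCongrLeft_apply, LinearMap.funLeft_apply,
      Finsupp.linearEquivFunOnFinite_single]
    rw [Pi.single_apply, Pi.single_apply]
    congr 1
    simp only [eq_iff_iff]
    exact ⟨fun h => by rw [← h, Equiv.apply_symm_apply], fun h => by rw [h, Equiv.symm_apply_apply]⟩
  set T := substEquiv g with hTdef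
  have hT : ∀ j, T (lf (r j)) = X (q (e j)) := by
    intro j
    rw [hTdef, substEquiv_apply, subst_lf]
    rw [show g.toLinearMap (r j) = Pi.single (q (e j)) 1 from hg j, lf_single]
  set Sv : Set (Fin N) := Set.range (fun j => q (e j)) with hSv
  set χ : MvPolynomial (Fin N) ℂ →ₐ[ℂ] MvPolynomial (Fin N) ℂ :=
    (aeval (fun i => if i ∈ Sv then 0 else X i)).comp T.toAlgHom with hχ
  have hker : RingHom.ker χ = Ideal.span (Set.range fun j => lf (r j)) := by
    apply le_antisymm
    · intro f hf
      rw [RingHom.mem_ker, hχ, AlgHom.comp_apply] at hf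
      have h2 : T.toAlgHom f ∈ Ideal.span ((fun i => (X i : MvPolynomial (Fin N) ℂ)) '' Sv) := by
        rw [← ker_aeval_ite Sv]
        exact hf
      have h3 := Ideal.mem_map_of_mem (T.symm.toAlgHom : MvPolynomial (Fin N) ℂ →ₐ[ℂ] _) h2
      rw [Ideal.map_span] at h3
      have h4 : T.symm.toAlgHom (T.toAlgHom f) = f := T.symm_apply_apply f
      rw [h4] at h3
      have h5 : (T.symm.toAlgHom '' ((fun i => (X i : MvPolynomial (Fin N) ℂ)) '' Sv)) =
          Set.range (fun j => lf (r j)) := by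
        rw [hSv, ← Set.range_comp, ← Set.range_comp]
        apply congrArg
        funext j
        show T.symm (X (q (e j))) = lf (r j)
        rw [← hT j]
        exact T.symm_apply_apply _
      rw [h5] at h3
      exact h3
    · rw [Ideal.span_le]
      rintro _ ⟨j, rfl⟩
      rw [SetLike.mem_coe, RingHom.mem_ker, hχ, AlgHom.comp_apply]
      show aeval _ (T (lf (r j))) = 0
      rw [hT j, aeval_X, if_pos ⟨j, rfl⟩]
  rw [← hker]
  exact RingHom.ker_isPrime χ

end

end MomentAux

open MvPolynomial Sum

namespace MomentAux

noncomputable section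

variable {N : ℕ}

/-- Weight function: `X i` has weight `e_i`, `Y i` has weight `-e_i`. -/
def ww (N : ℕ) : (Fin N ⊕ Fin N) → (Fin N → ℤ) :=
  Sum.elim (fun i => Pi.single i 1) (fun i => -Pi.single i 1)

lemma weight_ww_apply (m : (Fin N ⊕ Fin N) →₀ ℕ) (i : Fin N) :
    Finsupp.weight (ww N) m i = (m (inl i) : ℤ) - (m (inr i) : ℤ) := by
  classical
  rw [Finsupp.weight_apply, Finsupp.sum_fintype _ _ (by intro s; rw [zero_smul])]
  rw [Finset.sum_apply]
  rw [Fintype.sum_sum_type]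
  simp only [ww, Sum.elim_inl, Sum.elim_inr, Pi.smul_apply, Pi.neg_apply, Pi.single_apply,
    smul_ite, smul_neg, smul_zero, nsmul_eq_mul, mul_one]
  rw [Finset.sum_neg_distrib, Finset.sum_ite_eq, Finset.sum_ite_eq]
  simp
  ring

/-- The "corner" monomial exponent of degree `d`. -/
def τd (d : Fin N → ℤ) : (Fin N ⊕ Fin N) →₀ ℕ :=
  Finsupp.equivFunOnFinite.symm (Sum.elim (fun i => (d i).toNat) (fun i => (-d i).toNat))

lemma τd_apply_inl (d : Fin N → ℤ) (i : Fin N) : τd d (inl i) = (d i).toNat := rfl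
lemma τd_apply_inr (d : Fin N → ℤ) (i : Fin N) : τd d (inr i) = (-d i).toNat := rfl

/-- The "interior" exponent of a monomial. -/
def γm (m : (Fin N ⊕ Fin N) →₀ ℕ) : Fin N →₀ ℕ :=
  Finsupp.equivFunOnFinite.symm (fun i => min (m (inl i)) (m (inr i)))

lemma γm_apply (m : (Fin N ⊕ Fin N) →₀ ℕ) (i : Fin N) :
    γm m i = min (m (inl i)) (m (inr i)) := rfl

lemma homog_decomp (d : Fin N → ℤ) (m : (Fin N ⊕ Fin N) →₀ ℕ)
    (hm : Finsupp.weight (ww N) m = d) :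
    τd d + (Finsupp.mapDomain inl (γm m) + Finsupp.mapDomain inr (γm m)) = m := by
  have hw : ∀ i, (m (inl i) : ℤ) - (m (inr i) : ℤ) = d i := by
    intro i; rw [← weight_ww_apply, hm]
  ext s
  rcases s with i | i
  · rw [Finsupp.add_apply, Finsupp.add_apply,
      Finsupp.mapDomain_apply Sum.inl_injective,
      Finsupp.mapDomain_notin_range _ _ (by simp), τd_apply_inl, γm_apply]
    have := hw i
    omega
  · rw [Finsupp.add_apply, Finsupp.add_apply,
      Finsupp.mapDomain_notin_range _ _ (by simp),
      Finsupp.mapDomain_apply Sum.inr_injective, τd_apply_inr, γm_apply]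
    have := hw i
    omega

lemma coord_inl (d : Fin N → ℤ) (m : (Fin N ⊕ Fin N) →₀ ℕ)
    (hm : Finsupp.weight (ww N) m = d) (i : Fin N) :
    m (inl i) = (d i).toNat + γm m i := by
  have hw : (m (inl i) : ℤ) - (m (inr i) : ℤ) = d i := by
    rw [← weight_ww_apply, hm]
  rw [γm_apply]
  omega

/-- `Φ` on monomials. -/
lemma Phi_monomial (γ : Fin N →₀ ℕ) (c : ℂ) :
    aeval (fun i => (X (inl i) * X (inr i) : MvPolynomial (Fin N ⊕ Fin N) ℂ)) (monomial γ c)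
      = monomial (Finsupp.mapDomain inl γ + Finsupp.mapDomain inr γ) c := by
  classical
  induction γ using Finsupp.induction with
  | zero => simp [aeval_C, algebraMap_eq, monomial_zero']
  | single_add i k γ hi hk ih =>
    have hsplit : monomial (Finsupp.single i k + γ) c
        = monomial γ c * monomial (Finsupp.single i k) 1 := by
      rw [monomial_mul, mul_one, add_comm]
    rw [hsplit, map_mul, ih]
    have h2 : (monomial (Finsupp.single i k) (1:ℂ)) = X i ^ k := X_pow_eq_monomial.symm
    rw [h2, map_pow, aeval_X]
    rw [mul_pow, X_pow_eq_monomial, X_pow_eq_monomial, monomial_mul, monomial_mul]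
    simp only [mul_one, one_mul]
    congr 1
    rw [Finsupp.mapDomain_add, Finsupp.mapDomain_add, Finsupp.mapDomain_single,
      Finsupp.mapDomain_single]
    abel

variable {B : Type*} [CommRing B] [Algebra ℂ B]

/-- Values of the map `Ψ`. -/
def ψv (ub : Fin N → B) : (Fin N ⊕ Fin N) → AddMonoidAlgebra B (Fin N → ℤ) :=
  Sum.elim (fun i => AddMonoidAlgebra.single (Pi.single i 1) (ub i))
           (fun i => AddMonoidAlgebra.single (-Pi.single i 1) 1)

lemma Psi_monomial (ub : Fin N → B) (m : (Fin N ⊕ Fin N) →₀ ℕ) (c : ℂ) :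
    aeval (ψv ub) (monomial m c) =
      AddMonoidAlgebra.single (Finsupp.weight (ww N) m)
        (algebraMap ℂ B c * ∏ i, ub i ^ m (inl i)) := by
  classical
  rw [aeval_monomial]
  rw [Finsupp.prod_fintype _ _ (by intro s; rw [pow_zero])]
  rw [Fintype.prod_sum_type]
  simp only [ψv, Sum.elim_inl, Sum.elim_inr, AddMonoidAlgebra.single_pow, one_pow]
  rw [AddMonoidAlgebra.prod_single, AddMonoidAlgebra.prod_single]
  rw [AddMonoidAlgebra.single_mul_single]
  have halg : (algebraMap ℂ (AddMonoidAlgebra B (Fin N → ℤ))) c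
      = AddMonoidAlgebra.single 0 (algebraMap ℂ B c) := by
    rw [AddMonoidAlgebra.coe_algebraMap]
    rfl
  rw [halg, AddMonoidAlgebra.single_mul_single, zero_add]
  rw [Finset.prod_const_one, mul_one]
  congr 1
  ext i
  rw [Finsupp.weight_apply, Finsupp.sum_fintype _ _ (by intro s; rw [zero_smul])]
  rw [Finset.sum_apply, Fintype.sum_sum_type]
  rw [Pi.add_apply, Finset.sum_apply, Finset.sum_apply]
  simp only [ww, Sum.elim_inl, Sum.elim_inr, Pi.smul_apply, Pi.neg_apply, Pi.single_apply,
    smul_ite, smul_neg, smul_zero, nsmul_eq_mul, mul_one]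

end

end MomentAux

open MvPolynomial Sum

namespace MomentAux

noncomputable section

variable {N : ℕ} {B : Type*} [CommRing B] [Algebra ℂ B]

lemma algHom_monomial (χ : MvPolynomial (Fin N) ℂ →ₐ[ℂ] B) (γ : Fin N →₀ ℕ) (c : ℂ) :
    χ (monomial γ c) = algebraMap ℂ B c * ∏ i, χ (X i) ^ γ i := by
  conv_lhs => rw [aeval_unique χ]
  rw [aeval_monomial, Finsupp.prod_fintype _ _ (by intro s; rw [pow_zero])]
  rfl

lemma Psi_homog (ub : Fin N → B) (f : MvPolynomial (Fin N ⊕ Fin N) ℂ) (d : Fin N → ℤ)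
    (hf : f.IsWeightedHomogeneous (ww N) d) :
    aeval (ψv ub) f = AddMonoidAlgebra.single d
      (∑ m ∈ f.support, algebraMap ℂ B (coeff m f) * ∏ i, ub i ^ m (inl i)) := by
  conv_lhs => rw [f.as_sum]
  rw [map_sum]
  have h1 : ∀ m ∈ f.support, aeval (ψv ub) (monomial m (coeff m f)) =
      AddMonoidAlgebra.single d (algebraMap ℂ B (coeff m f) * ∏ i, ub i ^ m (inl i)) := by
    intro m hm
    rw [Psi_monomial, hf (mem_support_iff.mp hm)]
  rw [Finset.sum_congr rfl h1]
  exact (map_sum (AddMonoidAlgebra.singleAddHom d) _ _).symm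

lemma homog_eq_mul (f : MvPolynomial (Fin N ⊕ Fin N) ℂ) (d : Fin N → ℤ)
    (hf : f.IsWeightedHomogeneous (ww N) d) :
    f = monomial (τd d) 1 *
      aeval (fun i => (X (inl i) * X (inr i) : MvPolynomial (Fin N ⊕ Fin N) ℂ))
        (∑ m ∈ f.support, monomial (γm m) (coeff m f)) := by
  rw [map_sum, Finset.mul_sum]
  conv_lhs => rw [f.as_sum]
  apply Finset.sum_congr rfl
  intro m hm
  rw [Phi_monomial, monomial_mul, one_mul]
  rw [homog_decomp d m (hf (mem_support_iff.mp hm))]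

end

end MomentAux

open MomentAux

/-- Theorem 3.2 combined with Theorem 2.2(3): for a faithful
stable torus module (weights `α` generate `ℤⁿ` and `0` lies in the relative
interior of the convex hull of the weights), the ideal generated by the
components `μ_j = Σ_i α_i(j)·X_i·Y_i` of the complexified moment map in
`ℂ[X₁,…,X_N,Y₁,…,Y_N]` is prime. -/
theorem torus_moment_ideal_isPrime
    (n N : ℕ) (hn : 1 ≤ n) (hN : 1 ≤ N)
    (α : Fin N → (Fin n → ℤ))
    (hfaithful : AddSubgroup.closure (Set.range α) = (⊤ : AddSubgroup (Fin n → ℤ)))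
    (hstable : (0 : EuclideanSpace ℝ (Fin n)) ∈
      intrinsicInterior ℝ (convexHull ℝ
        (Set.range fun i => (WithLp.toLp 2 (fun j => (α i j : ℝ)) : EuclideanSpace ℝ (Fin n))))) :
    (Ideal.span (Set.range fun j : Fin n =>
        (∑ i : Fin N, C (α i j : ℂ) * X (Sum.inl i) * X (Sum.inr i) :
          MvPolynomial (Fin N ⊕ Fin N) ℂ))).IsPrime := by
  classical
  haveI : Nonempty (Fin N) := Fin.pos_iff_nonempty.mp hN
  -- Step 1: positive relation among the weights.
  obtain ⟨t, htpos, htsum⟩ := MomentAux.exists_pos_combo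
    (fun i => (WithLp.toLp 2 (fun j => (α i j : ℝ)) : EuclideanSpace ℝ (Fin n))) hstable
  have htrel : ∀ j, ∑ i, t i * (α i j : ℝ) = 0 := by
    intro j
    have h1 := congrArg (fun v : EuclideanSpace ℝ (Fin n) => v j) htsum
    simpa [Finset.sum_apply, PiLp.smul_apply, smul_eq_mul] using h1
  -- Step 2: linear independence of the coefficient vectors.
  set r : Fin n → (Fin N → ℂ) := fun j i => (α i j : ℂ) with hrdef
  have hr : LinearIndependent ℂ r := by
    rw [Fintype.linearIndependent_iff]
    intro g hg j₀
    have hcol : ∀ i, ∑ j, g j * (α i j : ℂ) = 0 := by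
      intro i
      have h1 := congrArg (fun v : Fin N → ℂ => v i) hg
      simpa [Finset.sum_apply, hrdef, mul_comm] using h1
    have hall : ∀ x : Fin n → ℤ, (∑ j, g j * (x j : ℂ)) = 0 := by
      intro x
      have hx : x ∈ AddSubgroup.closure (Set.range α) := by rw [hfaithful]; trivial
      induction hx using AddSubgroup.closure_induction with
      | mem y hy =>
        obtain ⟨i, rfl⟩ := hy
        exact hcol i
      | zero => simp
      | add y z hy hz ihy ihz =>
        simp only [Pi.add_apply, Int.cast_add, mul_add, Finset.sum_add_distrib, ihy, ihz, add_zero]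
      | neg y hy ihy =>
        simp only [Pi.neg_apply, Int.cast_neg, mul_neg, Finset.sum_neg_distrib, ihy, neg_zero]
    have := hall (Pi.single j₀ 1)
    rw [Finset.sum_eq_single j₀ (fun j _ hj => by
      rw [Pi.single_apply, if_neg hj]; simp) (by simp)] at this
    simpa using this
  -- Step 3: the base prime ideal and quotient domain.
  set I₀ : Ideal (MvPolynomial (Fin N) ℂ) := Ideal.span (Set.range fun j => lf (r j)) with hI₀
  haveI hI₀prime : I₀.IsPrime := span_lf_isPrime r hr
  set B := MvPolynomial (Fin N) ℂ ⧸ I₀ with hB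
  haveI : IsDomain B := Ideal.Quotient.isDomain I₀
  set χ : MvPolynomial (Fin N) ℂ →ₐ[ℂ] B := Ideal.Quotient.mkₐ ℂ I₀ with hχ
  set ub : Fin N → B := fun i => χ (X i) with hub
  -- the ub i are nonzero
  have hubne : ∀ i, ub i ≠ 0 := by
    intro i hzero
    have hmem : (X i : MvPolynomial (Fin N) ℂ) ∈ I₀ := by
      rw [← Ideal.Quotient.eq_zero_iff_mem]
      exact hzero
    -- evaluate at the positive vector t
    set ev : MvPolynomial (Fin N) ℂ →ₐ[ℂ] ℂ := aeval (fun k => (t k : ℂ)) with hev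
    have hevI₀ : I₀ ≤ RingHom.ker ev := by
      rw [hI₀, Ideal.span_le]
      rintro _ ⟨j, rfl⟩
      rw [SetLike.mem_coe, RingHom.mem_ker, hev, lf]
      simp only [LinearMap.coe_mk, AddHom.coe_mk, map_sum, map_mul, aeval_C, aeval_X]
      have : ∑ k, (algebraMap ℂ ℂ) (r j k) * (t k : ℂ) = ((∑ k, t k * (α k j : ℝ) : ℝ) : ℂ) := by
        push_cast
        simp only [hrdef, Algebra.algebraMap_self, RingHom.id_apply]
        apply Finset.sum_congr rfl
        intro k _
        push_cast
        ring
      rw [this, htrel j]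
      norm_num
    have h2 : ev (X i) = 0 := hevI₀ hmem
    rw [hev, aeval_X] at h2
    have := (htpos i).ne'
    exact this (by exact_mod_cast h2)
  -- Step 4: the map Ψ into the Laurent algebra.
  set D := AddMonoidAlgebra B (Fin N → ℤ) with hD
  haveI : IsDomain D := NoZeroDivisors.to_isDomain _
  set Ψ : MvPolynomial (Fin N ⊕ Fin N) ℂ →ₐ[ℂ] D := aeval (ψv ub) with hΨ
  set Φ : MvPolynomial (Fin N) ℂ →ₐ[ℂ] MvPolynomial (Fin N ⊕ Fin N) ℂ :=
    aeval (fun i => (X (inl i) * X (inr i) : MvPolynomial (Fin N ⊕ Fin N) ℂ)) with hΦ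
  -- the literal generators
  set μ : Fin n → MvPolynomial (Fin N ⊕ Fin N) ℂ := fun j =>
    ∑ i : Fin N, C (α i j : ℂ) * X (Sum.inl i) * X (Sum.inr i) with hμdef
  have hμΦ : ∀ j, μ j = Φ (lf (r j)) := by
    intro j
    rw [hμdef, hΦ, lf]
    simp only [LinearMap.coe_mk, AddHom.coe_mk, map_sum, map_mul, aeval_C, aeval_X,
      algebraMap_eq]
    apply Finset.sum_congr rfl
    intro i _
    ring
  -- Ψ ∘ Φ lands in degree 0
  have hΨΦ : ∀ p : MvPolynomial (Fin N) ℂ, Ψ (Φ p) = AddMonoidAlgebra.single 0 (χ p) := by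
    intro p
    have hcomp : (Ψ.comp Φ) = (AddMonoidAlgebra.singleZeroAlgHom.comp χ :
        MvPolynomial (Fin N) ℂ →ₐ[ℂ] D) := by
      apply algHom_ext
      intro i
      rw [AlgHom.comp_apply, AlgHom.comp_apply, hΦ, aeval_X, map_mul, hΨ, aeval_X, aeval_X]
      show ψv ub (inl i) * ψv ub (inr i) = AddMonoidAlgebra.singleZeroAlgHom (χ (X i))
      rw [ψv]
      simp only [Sum.elim_inl, Sum.elim_inr]
      rw [AddMonoidAlgebra.single_mul_single, add_neg_cancel, mul_one]
      rfl
    have := congrArg (fun f => f p) (congrArg DFunLike.coe hcomp)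
    simpa using this
  -- generators are in the kernel of Ψ
  have hgen : ∀ j, Ψ (μ j) = 0 := by
    intro j
    rw [hμΦ j, hΨΦ]
    have : χ (lf (r j)) = 0 := by
      rw [hχ]
      rw [Ideal.Quotient.mkₐ_eq_mk, Ideal.Quotient.eq_zero_iff_mem]
      exact Ideal.subset_span ⟨j, rfl⟩
    rw [this, AddMonoidAlgebra.single_zero]
  -- Main claim: span = ker Ψ
  have hkey : Ideal.span (Set.range μ) = RingHom.ker Ψ := by
    apply le_antisymm
    · rw [Ideal.span_le]
      rintro _ ⟨j, rfl⟩
      rw [SetLike.mem_coe, RingHom.mem_ker]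
      exact hgen j
    · intro f hf
      rw [RingHom.mem_ker] at hf
      -- decompose f into weighted homogeneous components
      have hfin := weightedHomogeneousComponent_finsupp (w := ww N) (φ := f)
      have hdec : ∑ d ∈ hfin.toFinset, weightedHomogeneousComponent (ww N) d f = f := by
        rw [← finsum_eq_sum _ hfin]
        exact finsum_weightedHomogeneousComponent (ww N) f
      set T := hfin.toFinset with hT
      set comp : (Fin N → ℤ) → MvPolynomial (Fin N ⊕ Fin N) ℂ :=
        fun d => weightedHomogeneousComponent (ww N) d f with hcompdef
      have hhom : ∀ d, (comp d).IsWeightedHomogeneous (ww N) d :=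
        fun d => weightedHomogeneousComponent_isWeightedHomogeneous d f
      -- the b-sums
      set bsum : (Fin N → ℤ) → B := fun d =>
        ∑ m ∈ (comp d).support, algebraMap ℂ B (coeff m (comp d)) * ∏ i, ub i ^ m (inl i)
        with hbsum
      have hΨcomp : ∀ d, Ψ (comp d) = AddMonoidAlgebra.single d (bsum d) :=
        fun d => Psi_homog ub (comp d) d (hhom d)
      -- each bsum vanishes
      have hbzero : ∀ d ∈ T, bsum d = 0 := by
        intro d₀ hd₀
        have h1 : (∑ d ∈ T, (AddMonoidAlgebra.single d (bsum d) :
            AddMonoidAlgebra B (Fin N → ℤ))) = 0 := by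
          rw [← Finset.sum_congr rfl (fun d _ => hΨcomp d), ← map_sum, hdec, hf]
        have h1' : (∑ d ∈ T, Finsupp.single d (bsum d) : (Fin N → ℤ) →₀ B) = 0 := by
            simpa only [AddMonoidAlgebra.coeff_sum, AddMonoidAlgebra.coeff_single,
              AddMonoidAlgebra.coeff_zero] using congrArg AddMonoidAlgebra.coeff h1
        have h2 := congrArg (fun z : (Fin N → ℤ) →₀ B => z d₀) h1'
        simp only [Finset.sum_apply', Finsupp.single_apply, Finsupp.coe_zero, Pi.zero_apply] at h2
        rw [Finset.sum_ite_eq' T d₀ (fun d => bsum d)] at h2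
        rw [if_pos hd₀] at h2
        exact h2
      -- conclude each component is in the span
      have hcompmem : ∀ d ∈ T, comp d ∈ Ideal.span (Set.range μ) := by
        intro d hd
        -- the interior polynomial F
        set F : MvPolynomial (Fin N) ℂ :=
          ∑ m ∈ (comp d).support, monomial (γm m) (coeff m (comp d)) with hF
        -- bsum d = (∏ ub^(d i).toNat) * χ F
        have hsplit : bsum d = (∏ i, ub i ^ (d i).toNat) * χ F := by
          rw [hbsum, hF, map_sum, Finset.mul_sum]
          apply Finset.sum_congr rfl
          intro m hm
          rw [algHom_monomial]
          have hexp : ∀ i, m (inl i) = (d i).toNat + γm m i :=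
            coord_inl d m ((hhom d) (mem_support_iff.mp hm))
          have : (∏ i, ub i ^ m (inl i)) =
              (∏ i, ub i ^ (d i).toNat) * ∏ i, ub i ^ (γm m i) := by
            rw [← Finset.prod_mul_distrib]
            apply Finset.prod_congr rfl
            intro i _
            rw [← pow_add, ← hexp i]
          rw [this, hub]
          ring
        have hχF : χ F = 0 := by
          have h1 := hbzero d hd
          rw [hsplit] at h1
          rcases mul_eq_zero.mp h1 with h2 | h2
          · exfalso
            have : (∏ i, ub i ^ (d i).toNat) ≠ 0 :=
              Finset.prod_ne_zero_iff.mpr fun i _ => pow_ne_zero _ (hubne i)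
            exact this h2
          · exact h2
        have hFI₀ : F ∈ I₀ := by
          rw [← Ideal.Quotient.eq_zero_iff_mem]
          exact hχF
        have hΦF : Φ F ∈ Ideal.span (Set.range μ) := by
          have h1 : Ideal.map Φ I₀ ≤ Ideal.span (Set.range μ) := by
            rw [hI₀, Ideal.map_span]
            apply Ideal.span_mono
            rintro _ ⟨_, ⟨j, rfl⟩, rfl⟩
            exact ⟨j, hμΦ j⟩
          exact h1 (Ideal.mem_map_of_mem Φ hFI₀)
        have := homog_eq_mul (comp d) d (hhom d)
        rw [← hF, ← hΦ] at this
        rw [this]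
        exact Ideal.mul_mem_left _ _ hΦF
      rw [← hdec]
      exact Ideal.sum_mem _ hcompmem
  rw [hkey]
  exact RingHom.ker_isPrime Ψ
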